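/- Let Y*, M : Ω → {0,1} be random variables with M independent of Y*, ℙ(M = 1) = p ∈ (0,1], and Y := M·Y*. Fix ŷ and a loss f* : {0,1} × ℝ → ℝ, write ℓ₊ := f*(1, ŷ), ℓ₋ := f*(0, ŷ), and f := PS_p f*. Then (i) Var[f*(Y*, ŷ)] = Var[Y*]·(ℓ₊ − ℓ₋)², (ii) Var[f(Y, ŷ)] = Var[Y]·(ℓ₊ − ℓ₋)²/p², and (iii) if q* := 𝔼[Y*] ∈ (0,1), then Var[f(Y, ŷ)] = ((1 − p·q*)/(p·(1 − q*)))·Var[f*(Y*, ŷ)]; in particular the variance of the unbiased estimator grows like 1/p as p → 0. -/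

import Mathlib

open MeasureTheory ProbabilityTheory

/-- Propensity-scoring operator for scalar losses on binary labels. -/
noncomputable def PS {𝒳 : Type*} (p : ℝ) (f : ℝ → 𝒳 → ℝ) : ℝ → 𝒳 → ℝ :=
  fun y z => y * ((f 1 z + (p - 1) * f 0 z) / p) + (1 - y) * f 0 z

section Aux

variable {Ω : Type*} [MeasurableSpace Ω] {P : Measure Ω} [IsProbabilityMeasure P]

lemma memLp_two_of_01 {Z : Ω → ℝ} (hZ : Measurable Z) (h01 : ∀ ω, Z ω = 0 ∨ Z ω = 1) :
    MemLp Z 2 P := by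
  refine (memLp_top_of_bound hZ.aestronglyMeasurable 1 (ae_of_all _ fun ω => ?_)).mono_exponent le_top
  rcases h01 ω with h | h <;> simp [h]

lemma var_const_add (Z : Ω → ℝ) (hZ : MemLp Z 2 P) (a c : ℝ) :
    variance (fun ω => a + c * Z ω) P = c ^ 2 * variance Z P := by
  have hZi : Integrable Z P := hZ.integrable one_le_two
  have hZ2 : Integrable (fun ω => Z ω ^ 2) P := hZ.integrable_sq
  have h : MemLp (fun ω => a + c * Z ω) 2 P := (memLp_const a).add (hZ.const_mul c)
  rw [variance_eq_sub h, variance_eq_sub hZ]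
  have e1 : (fun ω => a + c * Z ω) ^ 2
      = fun ω => a ^ 2 + ((2 * a * c) * Z ω + c ^ 2 * Z ω ^ 2) := by
    ext ω; simp [pow_two]; ring
  have e2 : ∫ ω, (a + c * Z ω) ∂P = a + c * ∫ ω, Z ω ∂P := by
    rw [integral_add (integrable_const a) (hZi.const_mul c), integral_const,
      integral_const_mul]
    simp
  calc (∫ ω, ((fun ω => a + c * Z ω) ^ 2) ω ∂P) - (∫ ω, (a + c * Z ω) ∂P) ^ 2
      = (a ^ 2 + ((2 * a * c) * ∫ ω, Z ω ∂P + c ^ 2 * ∫ ω, Z ω ^ 2 ∂P))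
          - (a + c * ∫ ω, Z ω ∂P) ^ 2 := by
        rw [e2]
        congr 1
        simp_rw [e1]
        have hsum : Integrable (fun ω => (2 * a * c) * Z ω + c ^ 2 * Z ω ^ 2) P :=
          (hZi.const_mul _).add (hZ2.const_mul _)
        rw [integral_add (integrable_const _) hsum,
          integral_add (hZi.const_mul _) (hZ2.const_mul _), integral_const,
          integral_const_mul, integral_const_mul]
        simp
    _ = c ^ 2 * ((∫ ω, (Z ^ 2) ω ∂P) - (∫ ω, Z ω ∂P) ^ 2) := by
        simp only [Pi.pow_apply]; ring

lemma var_01 {Z : Ω → ℝ} (hZ : Measurable Z) (h01 : ∀ ω, Z ω = 0 ∨ Z ω = 1) :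
    variance Z P = (∫ ω, Z ω ∂P) * (1 - ∫ ω, Z ω ∂P) := by
  have hm := memLp_two_of_01 (P := P) hZ h01
  rw [variance_eq_sub hm]
  have : ∫ ω, (Z ^ 2) ω ∂P = ∫ ω, Z ω ∂P := by
    apply integral_congr_ae
    filter_upwards with ω
    rcases h01 ω with h | h <;> simp [h]
  rw [this]; ring

lemma integral_01 {Z : Ω → ℝ} (hZ : Measurable Z) (h01 : ∀ ω, Z ω = 0 ∨ Z ω = 1) :
    ∫ ω, Z ω ∂P = (P {ω | Z ω = 1}).toReal := by
  have hset : MeasurableSet {ω | Z ω = 1} := hZ (measurableSet_singleton 1)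
  have : Z = Set.indicator {ω | Z ω = 1} (fun _ => (1 : ℝ)) := by
    ext ω
    rcases h01 ω with h | h <;> simp [Set.indicator_apply, h]
  rw [this, integral_indicator_const _ hset]
  simp
  rfl

end Aux

/-- **Variance of the unbiased binary estimator.** Under the binary masking model
(`M` independent of `Y*`, `ℙ(M=1) = p ∈ (0,1]`, `Y := M·Y*`), for a fixed prediction `ŷ`
and loss `f*` with `ℓ₊ := f*(1,ŷ)`, `ℓ₋ := f*(0,ŷ)` and `f := PS_p f*`:
(i) `Var[f*(Y*,ŷ)] = Var[Y*]·(ℓ₊ − ℓ₋)²`,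
(ii) `Var[f(Y,ŷ)] = Var[Y]·(ℓ₊ − ℓ₋)²/p²`, and
(iii) if `q* := 𝔼[Y*] ∈ (0,1)` then
`Var[f(Y,ŷ)] = ((1 − p·q*)/(p·(1 − q*)))·Var[f*(Y*,ŷ)]`. -/
theorem variance_of_unbiased_estimator
    {Ω : Type*} [MeasurableSpace Ω] (P : Measure Ω) [IsProbabilityMeasure P]
    (Ystar M : Ω → ℝ)
    (hYstar : Measurable Ystar) (hM : Measurable M)
    (hYstar01 : ∀ ω, Ystar ω = 0 ∨ Ystar ω = 1)
    (hM01 : ∀ ω, M ω = 0 ∨ M ω = 1)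
    (p : ℝ) (hp : p ∈ Set.Ioc (0 : ℝ) 1)
    (hindep : IndepFun Ystar M P)
    (hMp : P {ω | M ω = 1} = ENNReal.ofReal p)
    (yhat : ℝ) (fstar : ℝ → ℝ → ℝ) :
    variance (fun ω => fstar (Ystar ω) yhat) P
        = variance Ystar P * (fstar 1 yhat - fstar 0 yhat) ^ 2 ∧
    variance (fun ω => PS p fstar (M ω * Ystar ω) yhat) P
        = variance (fun ω => M ω * Ystar ω) P * (fstar 1 yhat - fstar 0 yhat) ^ 2 / p ^ 2 ∧
    ((∫ ω, Ystar ω ∂P) ∈ Set.Ioo (0 : ℝ) 1 →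
      variance (fun ω => PS p fstar (M ω * Ystar ω) yhat) P
        = ((1 - p * ∫ ω, Ystar ω ∂P) / (p * (1 - ∫ ω, Ystar ω ∂P)))
            * variance (fun ω => fstar (Ystar ω) yhat) P) := by
  obtain ⟨hp0, hp1⟩ := hp
  have hpne : p ≠ 0 := ne_of_gt hp0
  set ℓm := fstar 0 yhat with hℓm
  set ℓp := fstar 1 yhat with hℓp
  set Δ := ℓp - ℓm with hΔ
  set Y : Ω → ℝ := fun ω => M ω * Ystar ω with hY
  have hYmeas : Measurable Y := hM.mul hYstar
  have hY01 : ∀ ω, Y ω = 0 ∨ Y ω = 1 := by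
    intro ω
    rcases hM01 ω with h | h
    · left; simp [hY, h]
    · rcases hYstar01 ω with h' | h' <;> [left; right] <;> simp [hY, h, h']
  have hYstarL2 := memLp_two_of_01 (P := P) hYstar hYstar01
  have hYL2 := memLp_two_of_01 (P := P) hYmeas hY01
  -- (i)
  have part1 : variance (fun ω => fstar (Ystar ω) yhat) P
      = variance Ystar P * Δ ^ 2 := by
    have he : (fun ω => fstar (Ystar ω) yhat) = fun ω => ℓm + Δ * Ystar ω := by
      ext ω
      rcases hYstar01 ω with h | h <;> simp [h, hΔ] <;> ring
    rw [he, var_const_add _ hYstarL2, mul_comm]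
  -- (ii)
  have hePS : (fun ω => PS p fstar (Y ω) yhat) = fun ω => ℓm + (Δ / p) * Y ω := by
    ext ω
    rcases hY01 ω with h | h
    · simp [PS, h, hℓm]
    · simp only [PS, h]
      field_simp
      ring
  have part2 : variance (fun ω => PS p fstar (Y ω) yhat) P
      = variance Y P * Δ ^ 2 / p ^ 2 := by
    rw [hePS, var_const_add _ hYL2, div_pow]
    ring
  refine ⟨part1, part2, fun hq => ?_⟩
  -- (iii)
  obtain ⟨hq0, hq1⟩ := hq
  set q := ∫ ω, Ystar ω ∂P with hqdef
  have hEM : ∫ ω, M ω ∂P = p := by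
    rw [integral_01 hM hM01, hMp, ENNReal.toReal_ofReal hp0.le]
  have hEY : ∫ ω, Y ω ∂P = p * q := by
    have h := hindep.symm.integral_mul_eq_mul_integral hM.aestronglyMeasurable hYstar.aestronglyMeasurable
    simp only [Pi.mul_def] at h
    rw [hY]
    rw [h, hEM]
  have hVY : variance Y P = (p * q) * (1 - p * q) := by
    rw [var_01 hYmeas hY01, hEY]
  have hVYs : variance Ystar P = q * (1 - q) := var_01 hYstar hYstar01
  rw [part2, part1, hVY, hVYs]
  have h1q : (1 : ℝ) - q ≠ 0 := by linarith
  field_simp
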